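/- With ν_{β,n} as above and ω_k(z) = z^k the k-th power map on the n-th roots of unity, the pushforward satisfies ω_{k*} ν_{β,n} = ν_{β, n/gcd(n,k)}; that is, for every root of unity w whose order divides n/gcd(n,k), ∑_{z : z^n = 1, z^k = w} ν_{β,n}({z}) = ν_{β,n/gcd(n,k)}({w}). -/

import Mathlib

open Polynomial

/-- Generalized totient function: `φ_β(d) = d^β ∏_{p | d} (1 − p^{-β})`. -/
noncomputable def phiBeta (β : ℝ) (d : ℕ) : ℝ :=
  (d : ℝ) ^ β * ∏ p ∈ d.primeFactors, (1 - (p : ℝ) ^ (-β))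

/-- The weight of `ν_{β,m}` at a root of unity `z`. -/
noncomputable def nuWeight (β : ℝ) (m : ℕ) (z : ℂ) : ℝ :=
  (m : ℝ) ^ (-β) * phiBeta β (orderOf z) / (Nat.totient (orderOf z) : ℝ)


-- Bezout helper
lemma exists_inv_mod {p D : ℕ} (hp : 0 < p) (hD : 0 < D) (h : Nat.Coprime p D) :
    ∃ c t, c * p = D * t + 1 := by
  rcases eq_or_lt_of_le (show 1 ≤ D from hD) with hD1 | hD1
  · subst hD1
    exact ⟨1, p - 1, by omega⟩
  · obtain ⟨m, -, hm⟩ := Nat.exists_mul_mod_eq_one_of_coprime h hD1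
    refine ⟨m, p * m / D, ?_⟩
    rw [mul_comm m p]
    have := Nat.div_add_mod (p * m) D
    omega

lemma root_eq {D p c t : ℕ} (hc : c * p = D * t + 1) {y w : ℂ}
    (hyD : y ^ D = 1) (hyp : y ^ p = w) : y = w ^ c := by
  have : w ^ c = y ^ (c * p) := by rw [mul_comm, pow_mul, hyp]
  rw [this, hc, pow_succ, pow_mul, hyD, one_pow, one_mul]

lemma pow_c_pow_p {D p c t : ℕ} (hc : c * p = D * t + 1) {w : ℂ}
    (hw : w ^ D = 1) : (w ^ c) ^ p = w := by
  rw [← pow_mul, hc, pow_succ, pow_mul, hw, one_pow, one_mul]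

lemma orderOf_pow_c {p c : ℕ} {w : ℂ} (h : (w ^ c) ^ p = w) :
    orderOf (w ^ c) = orderOf w := by
  refine Nat.dvd_antisymm ?_ ?_
  · exact orderOf_dvd_of_pow_eq_one (by rw [← pow_mul, mul_comm, pow_mul, pow_orderOf_eq_one, one_pow])
  · refine orderOf_dvd_of_pow_eq_one ?_
    have h2 : w ^ orderOf (w ^ c) = ((w ^ c) ^ p) ^ orderOf (w ^ c) := by rw [h]
    have h3 : ((w ^ c) ^ p) ^ orderOf (w ^ c) = ((w ^ c) ^ orderOf (w ^ c)) ^ p :=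
      pow_right_comm _ _ _
    rw [h2, h3, pow_orderOf_eq_one, one_pow]

-- gcd arithmetic
lemma dvd_gcd_mul_prime {p d a : ℕ} (hp : p.Prime) (h : d ∣ a * p) : d ∣ Nat.gcd d a * p := by
  by_cases hpd : p ∣ d
  · obtain ⟨d', rfl⟩ := hpd
    have hd' : d' ∣ a := by
      have : p * d' ∣ p * a := by rwa [mul_comm a p] at h
      exact (mul_dvd_mul_iff_left hp.pos.ne').mp this
    have : d' ∣ Nat.gcd (p * d') a := Nat.dvd_gcd (dvd_mul_left d' p) hd'
    calc p * d' ∣ p * Nat.gcd (p * d') a := mul_dvd_mul_left p this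
      _ = Nat.gcd (p * d') a * p := mul_comm _ _
  · have hco : Nat.Coprime d p := Nat.Coprime.symm ((hp.coprime_iff_not_dvd).mpr hpd)
    have hda : d ∣ a := hco.dvd_of_dvd_mul_right h
    exact (Nat.dvd_gcd dvd_rfl hda).trans (dvd_mul_right _ _)

lemma gcd_step (n k' p : ℕ) (hp : p.Prime) (hn : 0 < n) :
    Nat.gcd n (k' * p) = Nat.gcd n k' * Nat.gcd (n / Nat.gcd n k') p := by
  set g := Nat.gcd n k' with hg
  have hgpos : 0 < g := Nat.gcd_pos_of_pos_left _ hn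
  have hgn : g ∣ n := Nat.gcd_dvd_left _ _
  set N1 := n / g with hN1
  have hn' : n = g * N1 := (Nat.mul_div_cancel' hgn).symm
  refine Nat.dvd_antisymm ?_ ?_
  · -- gcd n (k'p) ∣ g * gcd N1 p
    have h1 : Nat.gcd n (k' * p) ∣ Nat.gcd (Nat.gcd n (k' * p)) k' * p :=
      dvd_gcd_mul_prime hp (Nat.gcd_dvd_right _ _)
    have h2 : Nat.gcd (Nat.gcd n (k' * p)) k' ∣ g :=
      Nat.dvd_gcd ((Nat.gcd_dvd_left _ _).trans (Nat.gcd_dvd_left _ _)) (Nat.gcd_dvd_right _ _)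
    have h3 : Nat.gcd n (k' * p) ∣ g * p := h1.trans (mul_dvd_mul_right h2 p)
    have h4 : Nat.gcd n (k' * p) ∣ g * N1 := hn' ▸ Nat.gcd_dvd_left _ _
    have h5 : Nat.gcd n (k' * p) ∣ Nat.gcd (g * p) (g * N1) := Nat.dvd_gcd h3 h4
    rwa [Nat.gcd_mul_left, Nat.gcd_comm p N1] at h5
  · exact Nat.dvd_gcd (by rw [hn']; exact mul_dvd_mul_left g (Nat.gcd_dvd_left _ _))
      (mul_dvd_mul (Nat.gcd_dvd_right _ _) (Nat.gcd_dvd_right _ _))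

lemma div_gcd_step (n k' p : ℕ) (hp : p.Prime) (hn : 0 < n) :
    n / Nat.gcd n (k' * p) = (n / Nat.gcd n k') / Nat.gcd (n / Nat.gcd n k') p := by
  have hgpos : 0 < Nat.gcd n k' := Nat.gcd_pos_of_pos_left _ hn
  rw [gcd_step n k' p hp hn, ← Nat.div_div_eq_div_mul]

noncomputable def ff (β : ℝ) (e : ℕ) : ℝ := phiBeta β e / (Nat.totient e : ℝ)

lemma nuWeight_eq (β : ℝ) (m : ℕ) (z : ℂ) :
    nuWeight β m z = (m : ℝ) ^ (-β) * ff β (orderOf z) := by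
  rw [nuWeight, ff, mul_div_assoc]

lemma phiBeta_mul_of_dvd {β : ℝ} {p d : ℕ} (hp : p.Prime) (hpd : p ∣ d) (hd : 0 < d) :
    phiBeta β (p * d) = (p : ℝ) ^ β * phiBeta β d := by
  have h1 : ((p * d : ℕ) : ℝ) ^ β = (p : ℝ) ^ β * (d : ℝ) ^ β := by
    push_cast
    exact Real.mul_rpow (by positivity) (by positivity)
  have h2 : (p * d).primeFactors = d.primeFactors := by
    rw [Nat.primeFactors_mul hp.pos.ne' hd.ne', Nat.Prime.primeFactors hp]
    have hmem : p ∈ d.primeFactors := Nat.mem_primeFactors.mpr ⟨hp, hpd, hd.ne'⟩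
    ext q; simp only [Finset.mem_union, Finset.mem_singleton]
    constructor
    · rintro (rfl | h) <;> [exact hmem; exact h]
    · exact Or.inr
  rw [phiBeta, phiBeta, h1, h2]; ring

lemma phiBeta_mul_of_not_dvd {β : ℝ} {p d : ℕ} (hp : p.Prime) (hpd : ¬ p ∣ d) (hd : 0 < d) :
    phiBeta β (p * d) = (p : ℝ) ^ β * (1 - (p : ℝ) ^ (-β)) * phiBeta β d := by
  have h1 : ((p * d : ℕ) : ℝ) ^ β = (p : ℝ) ^ β * (d : ℝ) ^ β := by
    push_cast
    exact Real.mul_rpow (by positivity) (by positivity)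
  have h2 : (p * d).primeFactors = insert p d.primeFactors := by
    rw [Nat.primeFactors_mul hp.pos.ne' hd.ne', Nat.Prime.primeFactors hp]
    ext q; simp [or_comm]
  have h3 : p ∉ d.primeFactors := fun h => hpd (Nat.dvd_of_mem_primeFactors h)
  rw [phiBeta, phiBeta, h1, h2, Finset.prod_insert h3]; ring

lemma ff_mul_of_dvd {β : ℝ} {p d : ℕ} (hp : p.Prime) (hpd : p ∣ d) (hd : 0 < d) :
    ff β (p * d) = ((p : ℝ) ^ β / p) * ff β d := by
  rw [ff, ff, phiBeta_mul_of_dvd hp hpd hd, Nat.totient_mul_of_prime_of_dvd hp hpd]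
  push_cast
  rw [div_mul_div_comm]

lemma ff_mul_of_not_dvd {β : ℝ} {p d : ℕ} (hp : p.Prime) (hpd : ¬ p ∣ d) (hd : 0 < d) :
    ff β (p * d) = ((p : ℝ) ^ β * (1 - (p : ℝ) ^ (-β)) / ((p : ℝ) - 1)) * ff β d := by
  have htot : (p * d).totient = (p - 1) * d.totient := by
    rw [Nat.totient_mul ((hp.coprime_iff_not_dvd).mpr hpd), Nat.totient_prime hp]
  rw [ff, ff, phiBeta_mul_of_not_dvd hp hpd hd, htot]
  have : ((p - 1 : ℕ) : ℝ) = (p : ℝ) - 1 := by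
    have := hp.one_lt; push_cast [Nat.cast_sub (le_of_lt this)]; ring
  push_cast [this]
  rw [div_mul_div_comm]

-- key scalar identities
lemma sum_id_dvd {β : ℝ} {p d : ℕ} (hp : p.Prime) (hpd : p ∣ d) (hd : 0 < d) :
    (p : ℝ) * ff β (p * d) = (p : ℝ) ^ β * ff β d := by
  rw [ff_mul_of_dvd hp hpd hd]
  have : (p : ℝ) ≠ 0 := by exact_mod_cast hp.pos.ne'
  field_simp

lemma sum_id_not_dvd {β : ℝ} {p d : ℕ} (hp : p.Prime) (hpd : ¬ p ∣ d) (hd : 0 < d) :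
    ff β d + ((p : ℝ) - 1) * ff β (p * d) = (p : ℝ) ^ β * ff β d := by
  rw [ff_mul_of_not_dvd hp hpd hd]
  have hp1 : (1 : ℝ) < (p : ℝ) := by exact_mod_cast hp.one_lt
  have hne : (p : ℝ) - 1 ≠ 0 := by linarith
  have hpow : (p : ℝ) ^ β * (p : ℝ) ^ (-β) = 1 := by
    rw [← Real.rpow_add (by linarith), add_neg_cancel, Real.rpow_zero]
  have : ((p : ℝ) - 1) * ((p : ℝ) ^ β * (1 - (p : ℝ) ^ (-β)) / ((p : ℝ) - 1))
      = (p : ℝ) ^ β - 1 := by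
    field_simp
    nlinarith [hpow]
  rw [← mul_assoc, this]
  ring

lemma outer_id {β : ℝ} {p M : ℕ} (hp : 0 < p) (x : ℝ) :
    ((p * M : ℕ) : ℝ) ^ (-β) * ((p : ℝ) ^ β * x) = (M : ℝ) ^ (-β) * x := by
  have h1 : ((p * M : ℕ) : ℝ) ^ (-β) = (p : ℝ) ^ (-β) * (M : ℝ) ^ (-β) := by
    push_cast
    exact Real.mul_rpow (by positivity) (by positivity)
  have h2 : (p : ℝ) ^ (-β) * (p : ℝ) ^ β = 1 := by
    rw [← Real.rpow_add (by exact_mod_cast hp : (0:ℝ) < p), neg_add_cancel, Real.rpow_zero]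
  rw [h1]
  calc (p:ℝ)^(-β) * (M:ℝ)^(-β) * ((p:ℝ)^β * x)
      = ((p:ℝ)^(-β) * (p:ℝ)^β) * ((M:ℝ)^(-β) * x) := by ring
    _ = (M:ℝ)^(-β) * x := by rw [h2, one_mul]

lemma prime_step (β : ℝ) {N p : ℕ} (hp : p.Prime) (hN : 0 < N)
    {w : ℂ} (hw : w ^ (N / Nat.gcd N p) = 1) :
    ∑ y ∈ (nthRootsFinset N (1 : ℂ)).filter (fun y => y ^ p = w), nuWeight β N y =
      nuWeight β (N / Nat.gcd N p) w := by
  by_cases hpN : p ∣ N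
  · -- p ∣ N
    have hg : Nat.gcd N p = p := Nat.gcd_eq_right hpN
    rw [hg] at hw ⊢
    set M := N / p with hM
    have hNM : N = p * M := (Nat.mul_div_cancel' hpN).symm
    have hM0 : 0 < M := Nat.div_pos (Nat.le_of_dvd hN hpN) hp.pos
    have hw0 : w ≠ 0 := fun h => by simp [h, zero_pow hM0.ne'] at hw
    set d := orderOf w with hd
    have hfin : IsOfFinOrder w := isOfFinOrder_iff_pow_eq_one.mpr ⟨M, hM0, hw⟩
    have hd0 : 0 < d := hfin.orderOf_pos
    obtain ⟨y0, hy0⟩ := IsAlgClosed.exists_pow_nat_eq w hp.pos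
    have hy00 : y0 ≠ 0 := fun h => hw0 (by rw [← hy0, h, zero_pow hp.pos.ne'])
    set S := (nthRootsFinset N (1 : ℂ)).filter (fun y => y ^ p = w) with hS
    have hSimage : S = (nthRootsFinset p (1 : ℂ)).image (fun η => y0 * η) := by
      ext y
      simp only [hS, Finset.mem_filter, Finset.mem_image]
      constructor
      · rintro ⟨hyN, hyp⟩
        refine ⟨y * y0⁻¹, (mem_nthRootsFinset hp.pos 1).mpr ?_, ?_⟩
        · rw [mul_pow, hyp, inv_pow, hy0, mul_inv_cancel₀ hw0]
        · field_simp
      · rintro ⟨η, hη, rfl⟩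
        have hηp : η ^ p = 1 := (mem_nthRootsFinset hp.pos 1).mp hη
        refine ⟨(mem_nthRootsFinset hN 1).mpr ?_, ?_⟩
        · rw [hNM, pow_mul, mul_pow, hy0, hηp, mul_one, hw]
        · rw [mul_pow, hy0, hηp, mul_one]
    have hcardS : S.card = p := by
      rw [hSimage, Finset.card_image_of_injective _ (mul_right_injective₀ hy00),
        (Complex.isPrimitiveRoot_exp p hp.pos.ne').card_nthRootsFinset]
    have horder : ∀ y ∈ S, (orderOf y = d ∧ ¬ p ∣ d) ∨ orderOf y = p * d := by
      intro y hy
      simp only [hS, Finset.mem_filter] at hy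
      obtain ⟨hyN, hyp⟩ := hy
      have hyfin : IsOfFinOrder y :=
        isOfFinOrder_iff_pow_eq_one.mpr ⟨N, hN, (mem_nthRootsFinset hN 1).mp hyN⟩
      have hdy : d = orderOf y / Nat.gcd (orderOf y) p := by
        rw [hd, ← hyp, IsOfFinOrder.orderOf_pow _ _ hyfin]
      rcases hp.eq_one_or_self_of_dvd _ (Nat.gcd_dvd_right (orderOf y) p) with h1 | h1
      · left
        rw [h1, Nat.div_one] at hdy
        refine ⟨hdy.symm, fun hpdvd => ?_⟩
        have h2 : p ∣ Nat.gcd (orderOf y) p :=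
          Nat.dvd_gcd (by rwa [hdy] at hpdvd) dvd_rfl
        rw [h1] at h2
        exact absurd (Nat.dvd_one.mp h2) hp.one_lt.ne'
      · right
        have hpdvd : p ∣ orderOf y := h1 ▸ Nat.gcd_dvd_left (orderOf y) p
        rw [h1] at hdy
        rw [hdy, Nat.mul_div_cancel' hpdvd]
    by_cases hpd : p ∣ d
    · have hall : ∀ y ∈ S, orderOf y = p * d := by
        intro y hy
        rcases horder y hy with ⟨_, h2⟩ | h1
        · exact absurd hpd h2
        · exact h1
      have hcongr : ∀ y ∈ S, nuWeight β N y = (N : ℝ) ^ (-β) * ff β (p * d) := by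
        intro y hy; rw [nuWeight_eq, hall y hy]
      rw [Finset.sum_congr rfl hcongr, Finset.sum_const, hcardS, nsmul_eq_mul,
        nuWeight_eq, ← hd]
      calc (p : ℝ) * ((N : ℝ) ^ (-β) * ff β (p * d))
          = (N : ℝ) ^ (-β) * ((p : ℝ) * ff β (p * d)) := by ring
        _ = (N : ℝ) ^ (-β) * ((p : ℝ) ^ β * ff β d) := by rw [sum_id_dvd hp hpd hd0]
        _ = (M : ℝ) ^ (-β) * ff β d := by rw [hNM]; exact outer_id hp.pos _
    · obtain ⟨c, t, hc⟩ := exists_inv_mod hp.pos hd0 ((hp.coprime_iff_not_dvd).mpr hpd)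
      have hwd : w ^ d = 1 := pow_orderOf_eq_one w
      have hy1p : (w ^ c) ^ p = w := pow_c_pow_p hc hwd
      have hy1ord : orderOf (w ^ c) = d := by rw [orderOf_pow_c hy1p, hd]
      have hwN : w ^ N = 1 := by rw [hNM, mul_comm, pow_mul, hw, one_pow]
      have hy1S : w ^ c ∈ S := by
        simp only [hS, Finset.mem_filter]
        refine ⟨(mem_nthRootsFinset hN 1).mpr ?_, hy1p⟩
        rw [← pow_mul, mul_comm, pow_mul, hwN, one_pow]
      have huniq : ∀ y ∈ S, orderOf y = d → y = w ^ c := by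
        intro y hy hyd
        simp only [hS, Finset.mem_filter] at hy
        exact root_eq hc (by rw [← hyd]; exact pow_orderOf_eq_one y) hy.2
      have herase : ∀ y ∈ S.erase (w ^ c), orderOf y = p * d := by
        intro y hy
        have hyS := Finset.mem_of_mem_erase hy
        rcases horder y hyS with ⟨h1, _⟩ | h1
        · exact absurd (huniq y hyS h1) (Finset.ne_of_mem_erase hy)
        · exact h1
      have hcongr : ∀ y ∈ S.erase (w ^ c), nuWeight β N y = (N : ℝ) ^ (-β) * ff β (p * d) := by
        intro y hy; rw [nuWeight_eq, herase y hy]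
      rw [← Finset.insert_erase hy1S, Finset.sum_insert (Finset.notMem_erase _ _),
        Finset.sum_congr rfl hcongr, Finset.sum_const, Finset.card_erase_of_mem hy1S,
        hcardS, nsmul_eq_mul, nuWeight_eq, hy1ord, nuWeight_eq, ← hd]
      have hcast : ((p - 1 : ℕ) : ℝ) = (p : ℝ) - 1 := by
        have := hp.one_lt
        push_cast [Nat.cast_sub (le_of_lt this)]
        ring
      rw [hcast]
      calc (N : ℝ) ^ (-β) * ff β d + ((p : ℝ) - 1) * ((N : ℝ) ^ (-β) * ff β (p * d))
          = (N : ℝ) ^ (-β) * (ff β d + ((p : ℝ) - 1) * ff β (p * d)) := by ring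
        _ = (N : ℝ) ^ (-β) * ((p : ℝ) ^ β * ff β d) := by rw [sum_id_not_dvd hp hpd hd0]
        _ = (M : ℝ) ^ (-β) * ff β d := by rw [hNM]; exact outer_id hp.pos _
  · -- p coprime to N
    have hco : Nat.Coprime p N := (hp.coprime_iff_not_dvd).mpr hpN
    have hg : Nat.gcd N p = 1 := hco.symm
    rw [hg, Nat.div_one] at hw ⊢
    obtain ⟨c, t, hc⟩ := exists_inv_mod hp.pos hN hco
    have hwc_pow : (w ^ c) ^ p = w := pow_c_pow_p hc hw
    have hwc_mem : w ^ c ∈ nthRootsFinset N (1 : ℂ) := (mem_nthRootsFinset hN 1).mpr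
      (by rw [← pow_mul, mul_comm, pow_mul, hw, one_pow])
    have hfilter : (nthRootsFinset N (1 : ℂ)).filter (fun y => y ^ p = w) = {w ^ c} := by
      ext y
      simp only [Finset.mem_filter, Finset.mem_singleton]
      constructor
      · rintro ⟨hy, hyp⟩
        exact root_eq hc ((mem_nthRootsFinset hN 1).mp hy) hyp
      · rintro rfl
        exact ⟨hwc_mem, hwc_pow⟩
    rw [hfilter, Finset.sum_singleton]
    simp only [nuWeight, orderOf_pow_c hwc_pow]

/-- Pushforward of `ν_{β,n}` under the `k`-th power map is `ν_{β, n/gcd(n,k)}`. -/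
theorem pushforward_nu_beta_n (β : ℝ) (hβ : 0 < β) (n k : ℕ) (hn : 0 < n) (hk : 0 < k)
    (w : ℂ) (hw : w ∈ nthRootsFinset (n / Nat.gcd n k) (1 : ℂ)) :
    ∑ z ∈ (nthRootsFinset n (1 : ℂ)).filter (fun z => z ^ k = w), nuWeight β n z =
      nuWeight β (n / Nat.gcd n k) w := by
  have key : ∀ k, 0 < k → ∀ w : ℂ, w ^ (n / Nat.gcd n k) = 1 →
      ∑ z ∈ (nthRootsFinset n (1 : ℂ)).filter (fun z => z ^ k = w), nuWeight β n z =
        nuWeight β (n / Nat.gcd n k) w := by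
    intro k
    induction k using Nat.strong_induction_on with
    | _ k IH =>
      intro hk w hw
      rcases eq_or_ne k 1 with rfl | hk1
      · simp only [Nat.gcd_one_right, Nat.div_one] at hw ⊢
        have hfil : (nthRootsFinset n (1 : ℂ)).filter (fun z => z ^ 1 = w) = {w} := by
          ext z
          simp only [Finset.mem_filter, pow_one, Finset.mem_singleton]
          exact ⟨fun h => h.2, fun h => ⟨h ▸ (mem_nthRootsFinset hn 1).mpr hw, h⟩⟩
        rw [hfil, Finset.sum_singleton]
      · obtain ⟨p, hp, hpk⟩ := Nat.exists_prime_and_dvd hk1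
        have hkk : k = (k / p) * p := (Nat.div_mul_cancel hpk).symm
        set k' := k / p with hk'
        have hk'0 : 0 < k' := Nat.div_pos (Nat.le_of_dvd hk hpk) hp.pos
        have hk'lt : k' < k := Nat.div_lt_self hk hp.one_lt
        have hg0 : 0 < Nat.gcd n k' := Nat.gcd_pos_of_pos_left _ hn
        have hgn : Nat.gcd n k' ∣ n := Nat.gcd_dvd_left _ _
        have hgk' : Nat.gcd n k' ∣ k' := Nat.gcd_dvd_right _ _
        set N1 := n / Nat.gcd n k' with hN1d
        have hN10 : 0 < N1 := Nat.div_pos (Nat.le_of_dvd hn hgn) hg0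
        have harith : n / Nat.gcd n k = N1 / Nat.gcd N1 p := by
          rw [hkk]; exact div_gcd_step n k' p hp hn
        rw [harith] at hw ⊢
        have hmap : ∀ z ∈ (nthRootsFinset n (1 : ℂ)).filter (fun z => z ^ k = w),
            z ^ k' ∈ (nthRootsFinset N1 (1 : ℂ)).filter (fun y => y ^ p = w) := by
          intro z hz
          simp only [Finset.mem_filter] at hz ⊢
          obtain ⟨hzn, hzk⟩ := hz
          have hzn1 : z ^ n = 1 := (mem_nthRootsFinset hn 1).mp hzn
          obtain ⟨s, hs⟩ := hgk'
          have hmul : k' * N1 = s * n := by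
            rw [hs, hN1d]
            calc Nat.gcd n k' * s * (n / Nat.gcd n k')
                = s * (Nat.gcd n k' * (n / Nat.gcd n k')) := by ring
              _ = s * n := by rw [Nat.mul_div_cancel' hgn]
          refine ⟨(mem_nthRootsFinset hN10 1).mpr ?_, ?_⟩
          · rw [← pow_mul, hmul, mul_comm, pow_mul, hzn1, one_pow]
          · rw [← pow_mul, ← hkk, hzk]
        rw [← Finset.sum_fiberwise_of_maps_to hmap (nuWeight β n)]
        have hstep : ∀ y ∈ (nthRootsFinset N1 (1 : ℂ)).filter (fun y => y ^ p = w),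
            (∑ z ∈ ((nthRootsFinset n (1 : ℂ)).filter (fun z => z ^ k = w)).filter
              (fun z => z ^ k' = y), nuWeight β n z) = nuWeight β N1 y := by
          intro y hy
          simp only [Finset.mem_filter] at hy
          have hfil : ((nthRootsFinset n (1 : ℂ)).filter (fun z => z ^ k = w)).filter
              (fun z => z ^ k' = y) = (nthRootsFinset n (1 : ℂ)).filter (fun z => z ^ k' = y) := by
            ext z
            simp only [Finset.mem_filter]
            constructor
            · rintro ⟨⟨h1, _⟩, h3⟩; exact ⟨h1, h3⟩
            · rintro ⟨h1, h3⟩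
              exact ⟨⟨h1, by rw [hkk, pow_mul, h3, hy.2]⟩, h3⟩
          rw [hfil]
          exact IH k' hk'lt hk'0 y ((mem_nthRootsFinset hN10 1).mp hy.1)
        rw [Finset.sum_congr rfl hstep]
        exact prime_step β hp hN10 hw
  have hm0 : 0 < n / Nat.gcd n k :=
    Nat.div_pos (Nat.le_of_dvd hn (Nat.gcd_dvd_left n k)) (Nat.gcd_pos_of_pos_left _ hn)
  exact key k hk w ((mem_nthRootsFinset hm0 1).mp hw)
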